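/- Assume Ω ≠ 0, z ≠ 0 and σ = 0. Then: W(z) = Ω·z; (W - Ω·id) ∘ (W - Ω·id) ∘ (W + 2Ω·id) = 0; and (W - Ω·id) ∘ (W + 2Ω·id) ≠ 0. Hence W has the double eigenvalue Ω with the null vector z as eigenvector, the simple eigenvalue -2Ω, and minimal polynomial (X - Ω)²(X + 2Ω). (The algebraic content of the first case of Proposition 5 of the paper: Petrov–Bel type II with 𝒵 the canonical null SD eigenbivector determining the double Debever direction.) -/

import Mathlib

open Module LinearMap

noncomputable section

/-- The endomorphism `W(x) := 3Ω·B(u,x)·u + Ω·x + B(u,x)·z + B(z,x)·u` of `V`,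
representing the self-dual Weyl tensor `𝒲 = 3Ω·𝒰⊗𝒰 + Ω·𝒢 + 𝒰⊗̃𝒵` of a space-time
admitting a 2+2 umbilical structure acting on self-dual bivectors. -/
def Wmap {V : Type*} [AddCommGroup V] [Module ℂ V]
    (B : LinearMap.BilinForm ℂ V) (Ω : ℂ) (u z : V) : V →ₗ[ℂ] V :=
  (3 * Ω) • (B u).smulRight u + Ω • LinearMap.id + (B u).smulRight z + (B z).smulRight u

end

/-- Proposition 5, first type II case: if `Ω ≠ 0`, `z ≠ 0` and `σ = 0`
then `W(z) = Ω·z`, `(W - Ω·id)∘(W - Ω·id)∘(W + 2Ω·id) = 0` and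
`(W - Ω·id)∘(W + 2Ω·id) ≠ 0`. -/
theorem typeII_first_case
    {V : Type*} [AddCommGroup V] [Module ℂ V] [FiniteDimensional ℂ V]
    (hdim : finrank ℂ V = 3)
    (B : LinearMap.BilinForm ℂ V) (hBsym : ∀ x y, B x y = B y x)
    (hBnd : B.Nondegenerate)
    (Ω : ℂ) (u z : V) (hu : B u u = -1) (huz : B u z = 0)
    (hΩ : Ω ≠ 0) (hz : z ≠ 0) (hσ : B z z = 0) :
    Wmap B Ω u z z = Ω • z ∧
    (Wmap B Ω u z - Ω • LinearMap.id) ∘ₗ (Wmap B Ω u z - Ω • LinearMap.id)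
        ∘ₗ (Wmap B Ω u z + (2 * Ω) • LinearMap.id) = 0 ∧
    (Wmap B Ω u z - Ω • LinearMap.id) ∘ₗ (Wmap B Ω u z + (2 * Ω) • LinearMap.id) ≠ 0 := by
  have hzu : B z u = 0 := (hBsym z u).trans huz
  have hW : ∀ x, Wmap B Ω u z x
      = (3 * Ω * B u x) • u + Ω • x + (B u x) • z + (B z x) • u := by
    intro x; simp [Wmap, smul_smul]
  refine ⟨by simp [hW, huz, hσ], ?_, ?_⟩
  · ext x
    simp only [coe_comp, Function.comp_apply, LinearMap.sub_apply, LinearMap.add_apply, LinearMap.smul_apply, id_coe,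
      id_eq, hW, map_add, map_sub, map_smul, hu, huz, hzu, hσ, LinearMap.zero_apply, smul_eq_mul]
    module
  · have key : ∀ x, ((Wmap B Ω u z - Ω • LinearMap.id) ∘ₗ
        (Wmap B Ω u z + (2 * Ω) • LinearMap.id)) x = (-(B z x)) • z := by
      intro x
      simp only [coe_comp, Function.comp_apply, LinearMap.sub_apply, LinearMap.add_apply, LinearMap.smul_apply, id_coe,
        id_eq, hW, map_add, map_sub, map_smul, hu, huz, hzu, hσ, smul_eq_mul]
      module
    intro h0
    obtain ⟨x, hx⟩ : ∃ x, B z x ≠ 0 := by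
      by_contra h
      push_neg at h
      exact hz (hBnd.1 z h)
    have := key x
    rw [h0] at this
    simp only [LinearMap.zero_apply] at this
    exact hx (by simpa [neg_eq_zero, smul_eq_zero, hz] using this.symm)
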